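/- arXiv:1901.06832 — 3 statements merged into one kernel-verified Lean document; each statement's English description precedes it below -/
import Mathlib

section
/- For every n ≥ 1 and every even integer 2k, the Fourier coefficient of |P_n|² at 2k with k ≠ 0 vanishes; equivalently, writing |P_n(e^{it})|² = Σ_{j=-2^n+1}^{2^n-1} a_j e^{ijt}, one has a_{2k} = 0 for all k ≠ 0. -/
open Polynomial

/-- Rudin-Shapiro pair (P_n, Q_n). -/
noncomputable def RS : ℕ → Polynomial ℤ × Polynomial ℤ
  | 0 => (1, 1)
  | n + 1 => ((RS n).1 + X ^ (2 ^ n) * (RS n).2, (RS n).1 - X ^ (2 ^ n) * (RS n).2)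

noncomputable def RSP (n : ℕ) : Polynomial ℤ := (RS n).1
noncomputable def RSQ (n : ℕ) : Polynomial ℤ := (RS n).2

/-- evaluation at a complex number -/
noncomputable def Pe (n : ℕ) (z : ℂ) : ℂ := Polynomial.aeval z (RSP n)
noncomputable def Qe (n : ℕ) (z : ℂ) : ℂ := Polynomial.aeval z (RSQ n)
/-- The k-th Fourier coefficient of `t ↦ f (e^{it})`:
`(1/2π) ∫₀^{2π} f(e^{it}) e^{-ikt} dt`. -/
noncomputable def fc (f : ℂ → ℂ) (k : ℤ) : ℂ :=
  (1 / (2 * Real.pi)) *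
    ∫ t in (0:ℝ)..(2 * Real.pi),
      f (Complex.exp (t * Complex.I)) * Complex.exp (-(k : ℂ) * t * Complex.I)

/-- z ↦ |P_n(z)|² on the unit circle -/
noncomputable def fP (n : ℕ) (z : ℂ) : ℂ := Pe n z * (starRingEnd ℂ) (Pe n z)
/-- z ↦ conj(P_n(z)) Q_n(z) on the unit circle -/
noncomputable def fPQ (n : ℕ) (z : ℂ) : ℂ := (starRingEnd ℂ) (Pe n z) * Qe n z
/-- z ↦ P_n(z) conj(Q_n(z)) on the unit circle -/
noncomputable def fQP (n : ℕ) (z : ℂ) : ℂ := Pe n z * (starRingEnd ℂ) (Qe n z)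

/-! ### Auxiliary definitions and lemmas -/

/-- z ↦ |Q_n(z)|² on the unit circle -/
noncomputable def fQ (n : ℕ) (z : ℂ) : ℂ := Qe n z * (starRingEnd ℂ) (Qe n z)

lemma int_exp_eq_zero (j : ℤ) (hj : j ≠ 0) :
    (∫ t in (0:ℝ)..(2*Real.pi), Complex.exp (-(j:ℂ) * t * Complex.I)) = 0 := by
  have hc : (-(j:ℂ)) * Complex.I ≠ 0 := by
    simp [Complex.I_ne_zero, hj]
  have h : ∀ t:ℝ, -(j:ℂ) * t * Complex.I = (-(j:ℂ) * Complex.I) * t := by intro t; ring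
  simp_rw [h]
  rw [integral_exp_mul_complex hc]
  have h2 : (-(j:ℂ) * Complex.I) * ((2*Real.pi:ℝ):ℂ) = ((-j : ℤ):ℂ) * (2 * Real.pi * Complex.I) := by
    push_cast; ring
  rw [h2, Complex.exp_int_mul_two_pi_mul_I]
  simp

lemma fc_const (c : ℂ) (m : ℤ) (hm : m ≠ 0) : fc (fun _ => c) m = 0 := by
  unfold fc
  rw [intervalIntegral.integral_const_mul, int_exp_eq_zero m hm]
  simp

lemma fc_zero_fun (m : ℤ) : fc (fun _ => (0:ℂ)) m = 0 := by simp [fc]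

lemma fc_neg (g : ℂ → ℂ) (m : ℤ) : fc (fun z => -(g z)) m = - fc g m := by
  simp only [fc, neg_mul]
  rw [intervalIntegral.integral_neg]
  ring

lemma conj_exp (t : ℝ) :
    (starRingEnd ℂ) (Complex.exp (t*Complex.I)) = Complex.exp (-(t:ℂ)*Complex.I) := by
  rw [← Complex.exp_conj]
  congr 1
  simp [map_mul, Complex.conj_ofReal, Complex.conj_I]

lemma circ_exp (t : ℝ) :
    Complex.exp (t*Complex.I) * (starRingEnd ℂ) (Complex.exp (t*Complex.I)) = 1 := by
  rw [conj_exp, ← Complex.exp_add]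
  simp

lemma fc_split (f g1 g2 g3 g4 : ℂ → ℂ) (N : ℕ) (m : ℤ)
    (h : ∀ z : ℂ, z * (starRingEnd ℂ) z = 1 →
      f z = g1 z + g2 z + z ^ N * g3 z + ((starRingEnd ℂ) z) ^ N * g4 z)
    (h1 : Continuous g1) (h2 : Continuous g2) (h3 : Continuous g3) (h4 : Continuous g4) :
    fc f m = fc g1 m + fc g2 m + fc g3 (m - N) + fc g4 (m + N) := by
  have key : ∀ t : ℝ,
      f (Complex.exp (t*Complex.I)) * Complex.exp (-(m:ℂ)*t*Complex.I)
        = g1 (Complex.exp (t*Complex.I)) * Complex.exp (-(m:ℂ)*t*Complex.I)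
        + g2 (Complex.exp (t*Complex.I)) * Complex.exp (-(m:ℂ)*t*Complex.I)
        + g3 (Complex.exp (t*Complex.I)) * Complex.exp (-((m - (N:ℤ) : ℤ):ℂ)*t*Complex.I)
        + g4 (Complex.exp (t*Complex.I)) * Complex.exp (-((m + (N:ℤ) : ℤ):ℂ)*t*Complex.I) := by
    intro t
    have e3 : (Complex.exp (t*Complex.I))^N * Complex.exp (-(m:ℂ)*t*Complex.I)
        = Complex.exp (-((m - (N:ℤ) : ℤ):ℂ)*t*Complex.I) := by
      rw [← Complex.exp_nat_mul, ← Complex.exp_add]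
      congr 1; push_cast; ring
    have e4 : ((starRingEnd ℂ) (Complex.exp (t*Complex.I)))^N * Complex.exp (-(m:ℂ)*t*Complex.I)
        = Complex.exp (-((m + (N:ℤ) : ℤ):ℂ)*t*Complex.I) := by
      rw [conj_exp, ← Complex.exp_nat_mul, ← Complex.exp_add]
      congr 1; push_cast; ring
    rw [h _ (circ_exp t)]
    linear_combination g3 (Complex.exp (t*Complex.I)) * e3 + g4 (Complex.exp (t*Complex.I)) * e4
  have c1 : Continuous fun t : ℝ =>
      g1 (Complex.exp (t*Complex.I)) * Complex.exp (-(m:ℂ)*t*Complex.I) := by fun_prop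
  have c2 : Continuous fun t : ℝ =>
      g2 (Complex.exp (t*Complex.I)) * Complex.exp (-(m:ℂ)*t*Complex.I) := by fun_prop
  have c3 : Continuous fun t : ℝ =>
      g3 (Complex.exp (t*Complex.I)) * Complex.exp (-((m - (N:ℤ) : ℤ):ℂ)*t*Complex.I) := by fun_prop
  have c4 : Continuous fun t : ℝ =>
      g4 (Complex.exp (t*Complex.I)) * Complex.exp (-((m + (N:ℤ) : ℤ):ℂ)*t*Complex.I) := by fun_prop
  unfold fc
  rw [intervalIntegral.integral_congr (g := fun t : ℝ =>
        g1 (Complex.exp (t*Complex.I)) * Complex.exp (-(m:ℂ)*t*Complex.I)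
        + g2 (Complex.exp (t*Complex.I)) * Complex.exp (-(m:ℂ)*t*Complex.I)
        + g3 (Complex.exp (t*Complex.I)) * Complex.exp (-((m - (N:ℤ) : ℤ):ℂ)*t*Complex.I)
        + g4 (Complex.exp (t*Complex.I)) * Complex.exp (-((m + (N:ℤ) : ℤ):ℂ)*t*Complex.I))
      (fun t _ => key t)]
  rw [intervalIntegral.integral_add (((c1.fun_add c2).fun_add c3).intervalIntegrable _ _)
        (c4.intervalIntegrable _ _),
      intervalIntegral.integral_add ((c1.fun_add c2).intervalIntegrable _ _)
        (c3.intervalIntegrable _ _),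
      intervalIntegral.integral_add (c1.intervalIntegrable _ _) (c2.intervalIntegrable _ _)]
  push_cast
  ring

lemma Pe_succ (n : ℕ) (z : ℂ) : Pe (n+1) z = Pe n z + z^(2^n) * Qe n z := by
  simp [Pe, Qe, RSP, RSQ, RS]

lemma Qe_succ (n : ℕ) (z : ℂ) : Qe (n+1) z = Pe n z - z^(2^n) * Qe n z := by
  simp [Pe, Qe, RSP, RSQ, RS]

lemma Pe_zero (z : ℂ) : Pe 0 z = 1 := by simp [Pe, RSP, RS]
lemma Qe_zero (z : ℂ) : Qe 0 z = 1 := by simp [Qe, RSQ, RS]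

lemma Pe_one (z : ℂ) : Pe 1 z = 1 + z := by
  rw [show (1:ℕ) = 0 + 1 from rfl, Pe_succ, Pe_zero, Qe_zero]
  norm_num

lemma Qe_one (z : ℂ) : Qe 1 z = 1 - z := by
  rw [show (1:ℕ) = 0 + 1 from rfl, Qe_succ, Pe_zero, Qe_zero]
  norm_num

lemma fP_succ (n : ℕ) (z : ℂ) (hz : z * (starRingEnd ℂ) z = 1) :
    fP (n+1) z = fP n z + fQ n z + z^(2^n) * fPQ n z
      + ((starRingEnd ℂ) z)^(2^n) * fQP n z := by
  have h1 : z^(2^n) * ((starRingEnd ℂ) z)^(2^n) = 1 := by rw [← mul_pow, hz, one_pow]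
  simp only [fP, fQ, fPQ, fQP, Pe_succ, map_add, map_mul, map_pow]
  linear_combination (Qe n z * (starRingEnd ℂ) (Qe n z)) * h1

lemma fQ_succ (n : ℕ) (z : ℂ) (hz : z * (starRingEnd ℂ) z = 1) :
    fQ (n+1) z = fP n z + fQ n z + z^(2^n) * (-(fPQ n z))
      + ((starRingEnd ℂ) z)^(2^n) * (-(fQP n z)) := by
  have h1 : z^(2^n) * ((starRingEnd ℂ) z)^(2^n) = 1 := by rw [← mul_pow, hz, one_pow]
  simp only [fP, fQ, fPQ, fQP, Qe_succ, map_sub, map_mul, map_pow]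
  linear_combination (Qe n z * (starRingEnd ℂ) (Qe n z)) * h1

lemma fPQ_succ (n : ℕ) (z : ℂ) (hz : z * (starRingEnd ℂ) z = 1) :
    fPQ (n+1) z = fP n z + (-(fQ n z)) + z^(2^n) * (-(fPQ n z))
      + ((starRingEnd ℂ) z)^(2^n) * fQP n z := by
  have h1 : z^(2^n) * ((starRingEnd ℂ) z)^(2^n) = 1 := by rw [← mul_pow, hz, one_pow]
  simp only [fP, fQ, fPQ, fQP, Pe_succ, Qe_succ, map_add, map_sub, map_mul, map_pow]
  linear_combination (-(Qe n z * (starRingEnd ℂ) (Qe n z))) * h1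

lemma fQP_succ (n : ℕ) (z : ℂ) (hz : z * (starRingEnd ℂ) z = 1) :
    fQP (n+1) z = fP n z + (-(fQ n z)) + z^(2^n) * fPQ n z
      + ((starRingEnd ℂ) z)^(2^n) * (-(fQP n z)) := by
  have h1 : z^(2^n) * ((starRingEnd ℂ) z)^(2^n) = 1 := by rw [← mul_pow, hz, one_pow]
  simp only [fP, fQ, fPQ, fQP, Pe_succ, Qe_succ, map_add, map_sub, map_mul, map_pow]
  linear_combination (-(Qe n z * (starRingEnd ℂ) (Qe n z))) * h1

lemma fP_one (z : ℂ) (hz : z * (starRingEnd ℂ) z = 1) :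
    fP 1 z = (fun _ => (2:ℂ)) z + (fun _ => (0:ℂ)) z + z^1 * (fun _ => (1:ℂ)) z
      + ((starRingEnd ℂ) z)^1 * (fun _ => (1:ℂ)) z := by
  simp only [fP, Pe_one, map_add, map_one]
  linear_combination hz

lemma fQ_one (z : ℂ) (hz : z * (starRingEnd ℂ) z = 1) :
    fQ 1 z = (fun _ => (2:ℂ)) z + (fun _ => (0:ℂ)) z + z^1 * (fun _ => (-1:ℂ)) z
      + ((starRingEnd ℂ) z)^1 * (fun _ => (-1:ℂ)) z := by
  simp only [fQ, Qe_one, map_sub, map_one]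
  linear_combination hz

lemma fPQ_one (z : ℂ) (hz : z * (starRingEnd ℂ) z = 1) :
    fPQ 1 z = (fun _ => (0:ℂ)) z + (fun _ => (0:ℂ)) z + z^1 * (fun _ => (-1:ℂ)) z
      + ((starRingEnd ℂ) z)^1 * (fun _ => (1:ℂ)) z := by
  simp only [fPQ, Pe_one, Qe_one, map_add, map_one]
  linear_combination -hz

lemma fQP_one (z : ℂ) (hz : z * (starRingEnd ℂ) z = 1) :
    fQP 1 z = (fun _ => (0:ℂ)) z + (fun _ => (0:ℂ)) z + z^1 * (fun _ => (1:ℂ)) z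
      + ((starRingEnd ℂ) z)^1 * (fun _ => (-1:ℂ)) z := by
  simp only [fQP, Pe_one, Qe_one, map_sub, map_one]
  linear_combination -hz

lemma cont_Pe (n : ℕ) : Continuous (Pe n) := Polynomial.continuous_aeval _
lemma cont_Qe (n : ℕ) : Continuous (Qe n) := Polynomial.continuous_aeval _
lemma cont_fP (n : ℕ) : Continuous (fP n) :=
  (cont_Pe n).mul (Complex.continuous_conj.comp (cont_Pe n))
lemma cont_fQ (n : ℕ) : Continuous (fQ n) :=
  (cont_Qe n).mul (Complex.continuous_conj.comp (cont_Qe n))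
lemma cont_fPQ (n : ℕ) : Continuous (fPQ n) :=
  (Complex.continuous_conj.comp (cont_Pe n)).mul (cont_Qe n)
lemma cont_fQP (n : ℕ) : Continuous (fQP n) :=
  (cont_Pe n).mul (Complex.continuous_conj.comp (cont_Qe n))

lemma base_one :
    (∀ k : ℤ, k ≠ 0 → fc (fP 1) (2*k) = 0) ∧ (∀ k : ℤ, k ≠ 0 → fc (fQ 1) (2*k) = 0) ∧
    (∀ k : ℤ, fc (fPQ 1) (2*k) = 0) ∧ (∀ k : ℤ, fc (fQP 1) (2*k) = 0) ∧
    fc (fP 1) 0 = fc (fQ 1) 0 := by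
  have c2 : ∀ k : ℤ, k ≠ 0 → fc (fun _ => (2:ℂ)) k = 0 := fun k hk => fc_const _ _ hk
  have cp : ∀ k : ℤ, k ≠ 0 → fc (fun _ => (1:ℂ)) k = 0 := fun k hk => fc_const _ _ hk
  have cm : ∀ k : ℤ, k ≠ 0 → fc (fun _ => (-1:ℂ)) k = 0 := fun k hk => fc_const _ _ hk
  refine ⟨fun k hk => ?_, fun k hk => ?_, fun k => ?_, fun k => ?_, ?_⟩
  · rw [fc_split (fP 1) _ _ _ _ 1 (2*k) fP_one continuous_const continuous_const
        continuous_const continuous_const,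
      c2 _ (by omega), fc_zero_fun, cp _ (by omega), cp _ (by omega)]
    ring
  · rw [fc_split (fQ 1) _ _ _ _ 1 (2*k) fQ_one continuous_const continuous_const
        continuous_const continuous_const,
      c2 _ (by omega), fc_zero_fun, cm _ (by omega), cm _ (by omega)]
    ring
  · rw [fc_split (fPQ 1) _ _ _ _ 1 (2*k) fPQ_one continuous_const continuous_const
        continuous_const continuous_const,
      fc_zero_fun, cm _ (by omega), cp _ (by omega)]
    ring
  · rw [fc_split (fQP 1) _ _ _ _ 1 (2*k) fQP_one continuous_const continuous_const
        continuous_const continuous_const,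
      fc_zero_fun, cp _ (by omega), cm _ (by omega)]
    ring
  · rw [fc_split (fP 1) _ _ _ _ 1 0 fP_one continuous_const continuous_const
        continuous_const continuous_const,
      fc_split (fQ 1) _ _ _ _ 1 0 fQ_one continuous_const continuous_const
        continuous_const continuous_const,
      fc_zero_fun, cp _ (by omega), cp _ (by omega), cm _ (by omega), cm _ (by omega)]

lemma main_ind (n : ℕ) (hn : 1 ≤ n) :
    (∀ k : ℤ, k ≠ 0 → fc (fP n) (2*k) = 0) ∧ (∀ k : ℤ, k ≠ 0 → fc (fQ n) (2*k) = 0) ∧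
    (∀ k : ℤ, fc (fPQ n) (2*k) = 0) ∧ (∀ k : ℤ, fc (fQP n) (2*k) = 0) ∧
    fc (fP n) 0 = fc (fQ n) 0 := by
  induction n with
  | zero => omega
  | succ n ih =>
    by_cases hn1 : n = 0
    · subst hn1; exact base_one
    have hn' : 1 ≤ n := by omega
    obtain ⟨hP, hQ, hPQ, hQP, h0⟩ := ih hn'
    have h2 : ((2^n : ℕ) : ℤ) = 2 * 2^(n-1) := by
      obtain ⟨l, rfl⟩ : ∃ l, n = l + 1 := ⟨n - 1, by omega⟩
      push_cast [pow_succ]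
      ring
    have eA : ∀ k : ℤ, 2*k - ((2^n:ℕ):ℤ) = 2*(k - 2^(n-1)) := fun k => by rw [h2]; ring
    have eB : ∀ k : ℤ, 2*k + ((2^n:ℕ):ℤ) = 2*(k + 2^(n-1)) := fun k => by rw [h2]; ring
    have e0A : (0:ℤ) - ((2^n:ℕ):ℤ) = 2*(-(2^(n-1))) := by rw [h2]; ring
    have e0B : (0:ℤ) + ((2^n:ℕ):ℤ) = 2*(2^(n-1)) := by rw [h2]; ring
    refine ⟨fun k hk => ?_, fun k hk => ?_, fun k => ?_, fun k => ?_, ?_⟩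
    · rw [fc_split (fP (n+1)) _ _ _ _ (2^n) (2*k) (fP_succ n) (cont_fP n) (cont_fQ n)
          (cont_fPQ n) (cont_fQP n),
        hP k hk, hQ k hk, eA k, eB k, hPQ _, hQP _]
      ring
    · rw [fc_split (fQ (n+1)) _ _ _ _ (2^n) (2*k) (fQ_succ n) (cont_fP n) (cont_fQ n)
          (cont_fPQ n).neg (cont_fQP n).neg,
        hP k hk, hQ k hk, eA k, eB k, fc_neg, fc_neg, hPQ _, hQP _]
      ring
    · rw [fc_split (fPQ (n+1)) _ _ _ _ (2^n) (2*k) (fPQ_succ n) (cont_fP n) (cont_fQ n).neg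
          (cont_fPQ n).neg (cont_fQP n),
        eA k, eB k, fc_neg, fc_neg, hPQ _, hQP _]
      by_cases hk : k = 0
      · subst hk
        norm_num [h0]
      · rw [hP k hk, hQ k hk]; ring
    · rw [fc_split (fQP (n+1)) _ _ _ _ (2^n) (2*k) (fQP_succ n) (cont_fP n) (cont_fQ n).neg
          (cont_fPQ n) (cont_fQP n).neg,
        eA k, eB k, fc_neg, fc_neg, hPQ _, hQP _]
      by_cases hk : k = 0
      · subst hk
        norm_num [h0]
      · rw [hP k hk, hQ k hk]; ring
    · rw [fc_split (fP (n+1)) _ _ _ _ (2^n) 0 (fP_succ n) (cont_fP n) (cont_fQ n)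
          (cont_fPQ n) (cont_fQP n),
        fc_split (fQ (n+1)) _ _ _ _ (2^n) 0 (fQ_succ n) (cont_fP n) (cont_fQ n)
          (cont_fPQ n).neg (cont_fQP n).neg,
        e0A, e0B, fc_neg, fc_neg, hPQ _, hQP _]
      ring

theorem rudin_shapiro_even_autocorrelation_vanish (n : ℕ) (hn : 1 ≤ n) (k : ℤ) (hk : k ≠ 0) :
    fc (fP n) (2 * k) = 0 := by
  exact (main_ind n hn).1 k hk
end

section
/- There is a constant C₁ > 0 such that for all n ≥ 1, the autocorrelation coefficient of |P_n|² at index k_n = (2·2^n + (−1)^n)/3 satisfies |a_{k_n}| ≥ C₁·λ^{n/2}, where λ is the real root of x³ − 5x² + 12x − 16. -/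
open Polynomial

/-- coefficient with ℤ index -/
def cz (p : Polynomial ℤ) (k : ℤ) : ℤ := if 0 ≤ k then p.coeff k.toNat else 0

/-- correlation sum -/
def cor (B : ℕ) (p q : Polynomial ℤ) (k : ℤ) : ℤ :=
  ∑ j ∈ Finset.range B, p.coeff j * cz q ((j : ℤ) + k)

lemma cz_add (p q : Polynomial ℤ) (k : ℤ) : cz (p + q) k = cz p k + cz q k := by
  unfold cz; split <;> simp

lemma cz_sub (p q : Polynomial ℤ) (k : ℤ) : cz (p - q) k = cz p k - cz q k := by
  unfold cz; split <;> simp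

lemma cz_eq_zero_of_lt (p : Polynomial ℤ) (k : ℤ) (h : (p.natDegree : ℤ) < k) : cz p k = 0 := by
  unfold cz
  split
  · apply Polynomial.coeff_eq_zero_of_natDegree_lt
    omega
  · rfl

lemma cor_add_left (B : ℕ) (p p' q : Polynomial ℤ) (k : ℤ) :
    cor B (p + p') q k = cor B p q k + cor B p' q k := by
  unfold cor
  rw [← Finset.sum_add_distrib]
  exact Finset.sum_congr rfl fun j _ => by rw [Polynomial.coeff_add]; ring

lemma cor_sub_left (B : ℕ) (p p' q : Polynomial ℤ) (k : ℤ) :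
    cor B (p - p') q k = cor B p q k - cor B p' q k := by
  unfold cor
  rw [← Finset.sum_sub_distrib]
  exact Finset.sum_congr rfl fun j _ => by rw [Polynomial.coeff_sub]; ring

lemma cor_add_right (B : ℕ) (p q q' : Polynomial ℤ) (k : ℤ) :
    cor B p (q + q') k = cor B p q k + cor B p q' k := by
  unfold cor
  rw [← Finset.sum_add_distrib]
  exact Finset.sum_congr rfl fun j _ => by rw [cz_add]; ring

lemma cor_sub_right (B : ℕ) (p q q' : Polynomial ℤ) (k : ℤ) :
    cor B p (q - q') k = cor B p q k - cor B p q' k := by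
  unfold cor
  rw [← Finset.sum_sub_distrib]
  exact Finset.sum_congr rfl fun j _ => by rw [cz_sub]; ring

lemma cor_ext (B B' : ℕ) (p q : Polynomial ℤ) (k : ℤ) (hp : p.natDegree < B) (hBB : B ≤ B') :
    cor B' p q k = cor B p q k := by
  unfold cor
  rw [← Nat.add_sub_cancel' hBB, Finset.sum_range_add]
  have : ∀ i ∈ Finset.range (B' - B), p.coeff (B + i) * cz q ((↑(B + i) : ℤ) + k) = 0 := by
    intro i _
    rw [Polynomial.coeff_eq_zero_of_natDegree_lt (by omega), zero_mul]
  rw [Finset.sum_congr rfl this]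
  simp

lemma cor_shift (B N : ℕ) (p q : Polynomial ℤ) (k : ℤ) :
    cor (N + B) (X ^ N * p) q k = cor B p q (k + N) := by
  unfold cor
  rw [Finset.sum_range_add]
  have h1 : ∀ j ∈ Finset.range N, (X ^ N * p).coeff j * cz q ((j : ℤ) + k) = 0 := by
    intro j hj
    simp only [Finset.mem_range] at hj
    rw [mul_comm (X ^ N) p, Polynomial.coeff_mul_X_pow', if_neg (by omega), zero_mul]
  rw [Finset.sum_congr rfl h1, Finset.sum_const_zero, zero_add]
  refine Finset.sum_congr rfl fun i _ => ?_
  rw [add_comm N i, Polynomial.coeff_X_pow_mul]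
  congr 1
  push_cast
  ring

lemma cor_zero_of_ge (B : ℕ) (p q : Polynomial ℤ) (k : ℤ) (h : (q.natDegree : ℤ) < k) :
    cor B p q k = 0 := by
  unfold cor
  refine Finset.sum_eq_zero fun j _ => ?_
  rw [cz_eq_zero_of_lt q _ (by omega), mul_zero]

lemma cor_zero_of_le (B : ℕ) (p q : Polynomial ℤ) (k : ℤ) (h : k + B ≤ 0) :
    cor B p q k = 0 := by
  unfold cor
  refine Finset.sum_eq_zero fun j hj => ?_
  simp only [Finset.mem_range] at hj
  unfold cz
  rw [if_neg (by omega), mul_zero]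

lemma RSP_succ (n : ℕ) : RSP (n+1) = RSP n + X ^ (2 ^ n) * RSQ n := rfl
lemma RSQ_succ (n : ℕ) : RSQ (n+1) = RSP n - X ^ (2 ^ n) * RSQ n := rfl
lemma RSP_zero : RSP 0 = 1 := rfl
lemma RSQ_zero : RSQ 0 = 1 := rfl

lemma RS_deg (n : ℕ) : (RSP n).natDegree < 2 ^ n ∧ (RSQ n).natDegree < 2 ^ n := by
  induction n with
  | zero => constructor <;> simp [RSP_zero, RSQ_zero]
  | succ n ih =>
    have h2 : (X ^ (2 ^ n) * RSQ n : Polynomial ℤ).natDegree < 2 ^ (n+1) := by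
      apply lt_of_le_of_lt (Polynomial.natDegree_mul_le)
      rw [Polynomial.natDegree_X_pow]
      have := ih.2
      rw [pow_succ]
      omega
    have h1 : (RSP n).natDegree < 2 ^ (n+1) := lt_of_lt_of_le ih.1 (by
      rw [pow_succ]; omega)
    constructor
    · rw [RSP_succ]
      exact lt_of_le_of_lt (Polynomial.natDegree_add_le _ _) (max_lt h1 h2)
    · rw [RSQ_succ]
      exact lt_of_le_of_lt (Polynomial.natDegree_sub_le _ _) (max_lt h1 h2)

def Kk : ℕ → ℤ
  | 0 => 1
  | n + 1 => 2 ^ (n + 1) - Kk n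

lemma Kk_mul3 (n : ℕ) : 3 * Kk n = 2 * 2 ^ n + (-1) ^ n := by
  induction n with
  | zero => rfl
  | succ n ih => rw [Kk]; push_cast; rw [pow_succ, pow_succ]; omega

lemma Kk_bounds (n : ℕ) (hn : 1 ≤ n) : 1 ≤ Kk n ∧ Kk n ≤ 2 ^ n - 1 := by
  induction n with
  | zero => omega
  | succ n ih =>
    rcases Nat.eq_or_lt_of_le hn with h | h
    · have hn0 : n = 0 := by omega
      subst hn0
      simp [Kk]
    · have := ih (by omega)
      rw [Kk]
      have : (2:ℤ) ^ (n+1) = 2 * 2 ^ n := by ring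
      omega

lemma Kk_eq_div (n : ℕ) : Kk n = (2 * 2 ^ n + (-1) ^ n) / 3 := by
  rw [← Kk_mul3, Int.mul_ediv_cancel_left _ (by norm_num)]

-- new material
lemma cor_neg_left (B : ℕ) (p q : Polynomial ℤ) (k : ℤ) :
    cor B (-p) q k = -cor B p q k := by
  unfold cor
  rw [← Finset.sum_neg_distrib]
  exact Finset.sum_congr rfl fun j _ => by rw [Polynomial.coeff_neg]; ring

lemma cz_neg (p : Polynomial ℤ) (k : ℤ) : cz (-p) k = -cz p k := by
  unfold cz; split <;> simp

lemma cor_neg_right (B : ℕ) (p q : Polynomial ℤ) (k : ℤ) :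
    cor B p (-q) k = -cor B p q k := by
  unfold cor
  rw [← Finset.sum_neg_distrib]
  exact Finset.sum_congr rfl fun j _ => by rw [cz_neg]; ring

lemma cz_X_pow_mul (N : ℕ) (q : Polynomial ℤ) (m : ℤ) :
    cz (X ^ N * q) m = cz q (m - N) := by
  unfold cz
  by_cases hm : 0 ≤ m
  · rw [if_pos hm]
    by_cases hN : (N : ℤ) ≤ m
    · rw [if_pos (by omega), mul_comm, Polynomial.coeff_mul_X_pow', if_pos (by omega)]
      congr 1
      omega
    · rw [if_neg (by omega), mul_comm, Polynomial.coeff_mul_X_pow', if_neg (by omega)]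
  · rw [if_neg hm, if_neg (by omega)]

lemma cor_shift_right (B N : ℕ) (p q : Polynomial ℤ) (k : ℤ) :
    cor B p (X ^ N * q) k = cor B p q (k - N) := by
  unfold cor
  exact Finset.sum_congr rfl fun j _ => by rw [cz_X_pow_mul]; ring_nf

lemma cor_comb (n : ℕ) (k : ℤ) (a b c d : Polynomial ℤ)
    (ha : a.natDegree < 2^n) (hb : b.natDegree < 2^n)
    (hc : c.natDegree < 2^n) (hd : d.natDegree < 2^n) :
    cor (2^(n+1)) (a + X^(2^n) * b) (c + X^(2^n) * d) k =
      cor (2^n) a c k + cor (2^n) b d k +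
        cor (2^n) a d (k - 2^n) + cor (2^n) b c (k + 2^n) := by
  have h2 : (2:ℕ)^(n+1) = 2^n + 2^n := by rw [pow_succ]; omega
  rw [cor_add_left, cor_add_right, cor_add_right]
  rw [cor_ext _ _ a c k ha (by omega), cor_shift_right, cor_ext _ _ a d _ ha (by omega)]
  rw [h2, cor_shift, cor_shift, cor_shift_right]
  rw [add_sub_cancel_right]
  push_cast
  ring

lemma RSQ_succ' (n : ℕ) : RSQ (n+1) = RSP n + X ^ (2 ^ n) * (-(RSQ n)) := by
  rw [RSQ_succ, mul_neg]; ring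

lemma deg_neg_RSQ (n : ℕ) : (-(RSQ n)).natDegree < 2^n := by
  rw [Polynomial.natDegree_neg]; exact (RS_deg n).2

-- expansions
lemma expand_PP (n : ℕ) (k : ℤ) :
    cor (2^(n+1)) (RSP (n+1)) (RSP (n+1)) k =
      cor (2^n) (RSP n) (RSP n) k + cor (2^n) (RSQ n) (RSQ n) k +
        cor (2^n) (RSP n) (RSQ n) (k - 2^n) + cor (2^n) (RSQ n) (RSP n) (k + 2^n) := by
  rw [RSP_succ, cor_comb n k _ _ _ _ (RS_deg n).1 (RS_deg n).2 (RS_deg n).1 (RS_deg n).2]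

lemma expand_QQ (n : ℕ) (k : ℤ) :
    cor (2^(n+1)) (RSQ (n+1)) (RSQ (n+1)) k =
      cor (2^n) (RSP n) (RSP n) k + cor (2^n) (RSQ n) (RSQ n) k -
        cor (2^n) (RSP n) (RSQ n) (k - 2^n) - cor (2^n) (RSQ n) (RSP n) (k + 2^n) := by
  rw [RSQ_succ', cor_comb n k _ _ _ _ (RS_deg n).1 (deg_neg_RSQ n) (RS_deg n).1 (deg_neg_RSQ n),
    cor_neg_left, cor_neg_right, cor_neg_right, cor_neg_left, neg_neg]
  ring

lemma expand_PQ (n : ℕ) (k : ℤ) :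
    cor (2^(n+1)) (RSP (n+1)) (RSQ (n+1)) k =
      cor (2^n) (RSP n) (RSP n) k - cor (2^n) (RSQ n) (RSQ n) k -
        cor (2^n) (RSP n) (RSQ n) (k - 2^n) + cor (2^n) (RSQ n) (RSP n) (k + 2^n) := by
  rw [RSP_succ, RSQ_succ', cor_comb n k _ _ _ _ (RS_deg n).1 (RS_deg n).2 (RS_deg n).1 (deg_neg_RSQ n),
    cor_neg_right, cor_neg_right]
  ring

lemma expand_QP (n : ℕ) (k : ℤ) :
    cor (2^(n+1)) (RSQ (n+1)) (RSP (n+1)) k =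
      cor (2^n) (RSP n) (RSP n) k - cor (2^n) (RSQ n) (RSQ n) k +
        cor (2^n) (RSP n) (RSQ n) (k - 2^n) - cor (2^n) (RSQ n) (RSP n) (k + 2^n) := by
  rw [RSQ_succ', RSP_succ, cor_comb n k _ _ _ _ (RS_deg n).1 (deg_neg_RSQ n) (RS_deg n).1 (RS_deg n).2,
    cor_neg_left, cor_neg_left]
  ring

lemma sumAB (n : ℕ) (k : ℤ) (hk : k ≠ 0) :
    cor (2^n) (RSP n) (RSP n) k + cor (2^n) (RSQ n) (RSQ n) k = 0 := by
  induction n with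
  | zero =>
    have hcz : cz (1 : Polynomial ℤ) k = 0 := by
      unfold cz
      split
      · rw [Polynomial.coeff_one, if_neg (by omega)]
      · rfl
    have h1 : RSP 0 = 1 := rfl
    have h2 : RSQ 0 = 1 := rfl
    simp only [h1, h2, pow_zero, cor, Finset.range_one, Finset.sum_singleton,
      Nat.cast_zero, zero_add, hcz, mul_zero, add_zero]
  | succ n ih =>
    rw [expand_PP, expand_QQ]
    linarith [ih]

def Mm (n : ℕ) : ℤ := 2^n - Kk n

noncomputable def An (n : ℕ) (k : ℤ) : ℤ := cor (2^n) (RSP n) (RSP n) k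
noncomputable def Bb (n : ℕ) (k : ℤ) : ℤ := cor (2^n) (RSQ n) (RSQ n) k
noncomputable def Un (n : ℕ) (k : ℤ) : ℤ := cor (2^n) (RSP n) (RSQ n) k
noncomputable def Vn (n : ℕ) (k : ℤ) : ℤ := cor (2^n) (RSQ n) (RSP n) k

lemma Kk_succ (n : ℕ) : Kk (n+1) = 2^(n+1) - Kk n := rfl

lemma cast_pow2 (n : ℕ) : ((2^n : ℕ) : ℤ) = 2^n := by push_cast; ring

lemma step1 (n : ℕ) (hn : 1 ≤ n) : An (n+1) (Kk (n+1)) = Un n (Mm n) := by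
  have hd := RS_deg n
  have hK := Kk_bounds n hn
  have h2 : (2:ℤ)^(n+1) = 2^n + 2^n := by ring
  have hc := cast_pow2 n
  have e1 : cor (2^n) (RSP n) (RSP n) (Kk (n+1)) = 0 :=
    cor_zero_of_ge _ _ _ _ (by rw [Kk_succ]; omega)
  have e2 : cor (2^n) (RSQ n) (RSQ n) (Kk (n+1)) = 0 :=
    cor_zero_of_ge _ _ _ _ (by rw [Kk_succ]; omega)
  have e3 : cor (2^n) (RSQ n) (RSP n) (Kk (n+1) + 2^n) = 0 :=
    cor_zero_of_ge _ _ _ _ (by rw [Kk_succ]; omega)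
  have e4 : Kk (n+1) - 2^n = Mm n := by rw [Kk_succ, Mm]; omega
  unfold An Un
  rw [expand_PP, e1, e2, e3, e4]
  ring

lemma step2 (n : ℕ) (hn : 1 ≤ n) : An (n+1) (-Kk (n+1)) = Vn n (-Mm n) := by
  have hd := RS_deg n
  have hK := Kk_bounds n hn
  have h2 : (2:ℤ)^(n+1) = 2^n + 2^n := by ring
  have hc := cast_pow2 n
  have e1 : cor (2^n) (RSP n) (RSP n) (-Kk (n+1)) = 0 :=
    cor_zero_of_le _ _ _ _ (by rw [Kk_succ]; omega)
  have e2 : cor (2^n) (RSQ n) (RSQ n) (-Kk (n+1)) = 0 :=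
    cor_zero_of_le _ _ _ _ (by rw [Kk_succ]; omega)
  have e3 : cor (2^n) (RSP n) (RSQ n) (-Kk (n+1) - 2^n) = 0 :=
    cor_zero_of_le _ _ _ _ (by rw [Kk_succ]; omega)
  have e4 : -Kk (n+1) + 2^n = -Mm n := by rw [Kk_succ, Mm]; omega
  unfold An Vn
  rw [expand_PP, e1, e2, e3, e4]
  ring

lemma Mm_succ (n : ℕ) : Mm (n+1) = Kk n := by
  rw [Mm, Kk_succ]; ring

lemma step3 (n : ℕ) (hn : 1 ≤ n) : Un (n+1) (Mm (n+1)) = 2 * An n (Kk n) - Un n (-Mm n) := by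
  have hd := RS_deg n
  have hK := Kk_bounds n hn
  have hc := cast_pow2 n
  have hAB := sumAB n (Kk n) (by omega)
  have e3 : cor (2^n) (RSQ n) (RSP n) (Kk n + 2^n) = 0 :=
    cor_zero_of_ge _ _ _ _ (by omega)
  have e4 : Kk n - 2^n = -Mm n := by rw [Mm]; omega
  unfold An Un
  rw [Mm_succ, expand_PQ, e3, e4]
  omega

lemma step4 (n : ℕ) (hn : 1 ≤ n) : Un (n+1) (-Mm (n+1)) = 2 * An n (-Kk n) + Vn n (Mm n) := by
  have hd := RS_deg n
  have hK := Kk_bounds n hn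
  have hc := cast_pow2 n
  have hAB := sumAB n (-Kk n) (by omega)
  have e3 : cor (2^n) (RSP n) (RSQ n) (-Kk n - 2^n) = 0 :=
    cor_zero_of_le _ _ _ _ (by omega)
  have e4 : -Kk n + 2^n = Mm n := by rw [Mm]; omega
  unfold An Un Vn
  rw [Mm_succ, expand_PQ, e3, e4]
  omega

lemma step5 (n : ℕ) (hn : 1 ≤ n) : Vn (n+1) (Mm (n+1)) = 2 * An n (Kk n) + Un n (-Mm n) := by
  have hd := RS_deg n
  have hK := Kk_bounds n hn
  have hc := cast_pow2 n
  have hAB := sumAB n (Kk n) (by omega)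
  have e3 : cor (2^n) (RSQ n) (RSP n) (Kk n + 2^n) = 0 :=
    cor_zero_of_ge _ _ _ _ (by omega)
  have e4 : Kk n - 2^n = -Mm n := by rw [Mm]; omega
  unfold An Un Vn
  rw [Mm_succ, expand_QP, e3, e4]
  omega

lemma step6 (n : ℕ) (hn : 1 ≤ n) : Vn (n+1) (-Mm (n+1)) = 2 * An n (-Kk n) - Vn n (Mm n) := by
  have hd := RS_deg n
  have hK := Kk_bounds n hn
  have hc := cast_pow2 n
  have hAB := sumAB n (-Kk n) (by omega)
  have e3 : cor (2^n) (RSP n) (RSQ n) (-Kk n - 2^n) = 0 :=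
    cor_zero_of_le _ _ _ _ (by omega)
  have e4 : -Kk n + 2^n = Mm n := by rw [Mm]; omega
  unfold An Vn
  rw [Mm_succ, expand_QP, e3, e4]
  omega

lemma RSP_one : RSP 1 = 1 + X := by
  have := RSP_succ 0
  rw [this]
  norm_num [RSP, RSQ, RS]

lemma RSQ_one : RSQ 1 = 1 - X := by
  have := RSQ_succ 0
  rw [this]
  norm_num [RSP, RSQ, RS]

lemma Kk_one : Kk 1 = 1 := by norm_num [Kk]
lemma Mm_one : Mm 1 = 1 := by norm_num [Mm, Kk]

lemma cor_two (p q : Polynomial ℤ) (k : ℤ) :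
    cor 2 p q k = p.coeff 0 * cz q k + p.coeff 1 * cz q (1 + k) := by
  norm_num [cor, Finset.sum_range_succ]

lemma init_vals : An 1 (Kk 1) = 1 ∧ An 1 (-Kk 1) = 1 ∧ Vn 1 (Mm 1) = 1 ∧
    Un 1 (-Mm 1) = 1 ∧ Un 1 (Mm 1) = -1 ∧ Vn 1 (-Mm 1) = -1 := by
  have h2 : (2:ℕ)^1 = 2 := by norm_num
  refine ⟨?_, ?_, ?_, ?_, ?_, ?_⟩ <;>
    simp only [An, Un, Vn, Kk_one, Mm_one, h2, cor_two, cz, RSP_one, RSQ_one] <;>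
    norm_num [Polynomial.coeff_one, Polynomial.coeff_X] <;> decide

lemma inv (n : ℕ) (hn : 1 ≤ n) :
    An n (-Kk n) = An n (Kk n) ∧ Vn n (Mm n) = Un n (-Mm n) ∧
      Vn n (-Mm n) = Un n (Mm n) := by
  induction n with
  | zero => omega
  | succ n ih =>
    rcases Nat.lt_or_ge 1 (n+1) with h | h
    · have hn1 : 1 ≤ n := by omega
      obtain ⟨i1, i2, i3⟩ := ih hn1
      refine ⟨?_, ?_, ?_⟩
      · rw [step2 n hn1, step1 n hn1, i3]
      · rw [step5 n hn1, step4 n hn1, i1, i2]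
      · rw [step6 n hn1, step3 n hn1, i1, i2]
    · have : n + 1 = 1 := by omega
      rw [this]
      obtain ⟨a, b, c, d, e, f⟩ := init_vals
      exact ⟨by rw [a, b], by rw [c, d], by rw [e, f]⟩

lemma Xrec (n : ℕ) (hn : 1 ≤ n) :
    An (n+3) (Kk (n+3)) =
      An (n+2) (Kk (n+2)) + 2 * An (n+1) (Kk (n+1)) - 4 * An n (Kk n) := by
  have hn1 : 1 ≤ n + 1 := by omega
  have hn2 : 1 ≤ n + 2 := by omega
  -- x(m+2) = 2 x m - W m for m ≥ 1
  have hx2 : ∀ m, 1 ≤ m → An (m+2) (Kk (m+2)) = 2 * An m (Kk m) - Un m (-Mm m) := by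
    intro m hm
    rw [step1 (m+1) (by omega), step3 m hm]
  have hW : Un (n+1) (-Mm (n+1)) = 2 * An n (Kk n) + Un n (-Mm n) := by
    rw [step4 n hn, (inv n hn).1, (inv n hn).2.1]
  have h1 := hx2 n hn
  have h2 := hx2 (n+1) hn1
  rw [show n+1+2 = n+3 from rfl] at h2
  omega

lemma X1 : An 1 (Kk 1) = 1 := init_vals.1
lemma X2 : An 2 (Kk 2) = -1 := by
  rw [show (2:ℕ) = 1+1 from rfl, step1 1 le_rfl, init_vals.2.2.2.2.1]
lemma X3 : An 3 (Kk 3) = 1 := by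
  rw [show (3:ℕ) = 1+2 from rfl, show (1:ℕ)+2 = 1+1+1 from rfl, step1 (1+1) (by omega),
    step3 1 le_rfl, init_vals.1, init_vals.2.2.2.1]
  norm_num

lemma intexp (M : ℤ) : (∫ t in (0:ℝ)..(2 * Real.pi), Complex.exp ((M:ℂ) * t * Complex.I))
    = if M = 0 then ((2 * Real.pi : ℝ) : ℂ) else 0 := by
  by_cases h : M = 0
  · simp [h]
  · rw [if_neg h]
    have hc : ((M:ℂ) * Complex.I) ≠ 0 := by
      simp [Complex.I_ne_zero, h]
    have : ∀ t : ℝ, Complex.exp ((M:ℂ) * t * Complex.I) = Complex.exp ((M * Complex.I) * t) := by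
      intro t; ring_nf
    rw [intervalIntegral.integral_congr (fun t _ => this t)]
    rw [integral_exp_mul_complex hc]
    have h1 : (M:ℂ) * Complex.I * ((2 * Real.pi : ℝ):ℂ) = (M:ℂ) * (2 * (Real.pi:ℂ) * Complex.I) := by
      push_cast; ring
    rw [h1, Complex.exp_int_mul_two_pi_mul_I]
    simp

set_option maxHeartbeats 1000000 in
lemma fc_eq (p q : Polynomial ℤ) (B : ℕ) (hp : p.natDegree < B) (hq : q.natDegree < B) (k : ℤ) :
    fc (fun z => (starRingEnd ℂ) (aeval z p) * aeval z q) k = (cor B p q k : ℂ) := by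
  have point : ∀ t : ℝ,
      (starRingEnd ℂ) (aeval (Complex.exp (t*Complex.I)) p) *
          aeval (Complex.exp (t*Complex.I)) q * Complex.exp (-(k:ℂ) * t * Complex.I)
        = ∑ j ∈ Finset.range B, ∑ m ∈ Finset.range B,
            ((p.coeff j : ℂ) * (q.coeff m : ℂ)) *
              Complex.exp ((((m:ℤ) - (j:ℤ) - k : ℤ):ℂ) * t * Complex.I) := by
    intro t
    rw [aeval_eq_sum_range' hp, aeval_eq_sum_range' hq, map_sum, Finset.sum_mul_sum,
      Finset.sum_mul]
    refine Finset.sum_congr rfl fun j _ => ?_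
    rw [Finset.sum_mul]
    refine Finset.sum_congr rfl fun m _ => ?_
    have hz : ∀ n : ℕ, Complex.exp (t*Complex.I) ^ n = Complex.exp ((n:ℂ) * t * Complex.I) := by
      intro n
      rw [← Complex.exp_nat_mul]
      ring_nf
    simp only [zsmul_eq_mul, hz, map_mul]
    rw [← Complex.exp_conj]
    simp only [map_mul, Complex.conj_I, Complex.conj_ofReal, map_natCast, map_intCast]
    rw [show (p.coeff j : ℂ) * Complex.exp ((j:ℂ) * t * (-Complex.I)) *
        ((q.coeff m : ℂ) * Complex.exp ((m:ℂ) * t * Complex.I)) *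
        Complex.exp (-(k:ℂ) * t * Complex.I)
      = (p.coeff j : ℂ) * (q.coeff m : ℂ) *
        (Complex.exp ((j:ℂ) * t * (-Complex.I)) * Complex.exp ((m:ℂ) * t * Complex.I) *
          Complex.exp (-(k:ℂ) * t * Complex.I)) from by ring]
    rw [← Complex.exp_add, ← Complex.exp_add]
    congr 2
    push_cast
    ring
  unfold fc
  rw [intervalIntegral.integral_congr (fun t _ => point t)]
  have integ : ∀ (c : ℂ) (M : ℤ), IntervalIntegrable
      (fun t : ℝ => c * Complex.exp ((M:ℂ) * t * Complex.I)) MeasureTheory.volume 0 (2*Real.pi) := by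
    intro c M
    apply Continuous.intervalIntegrable
    exact continuous_const.mul (Complex.continuous_exp.comp (by fun_prop))
  have swap : (∫ t in (0:ℝ)..(2*Real.pi), ∑ j ∈ Finset.range B, ∑ m ∈ Finset.range B,
      ((p.coeff j : ℂ) * (q.coeff m : ℂ)) *
        Complex.exp ((((m:ℤ) - (j:ℤ) - k : ℤ):ℂ) * t * Complex.I))
      = ∑ j ∈ Finset.range B, ∫ t in (0:ℝ)..(2*Real.pi), ∑ m ∈ Finset.range B,
      ((p.coeff j : ℂ) * (q.coeff m : ℂ)) *
        Complex.exp ((((m:ℤ) - (j:ℤ) - k : ℤ):ℂ) * t * Complex.I) :=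
    intervalIntegral.integral_finset_sum (fun j _ => Continuous.intervalIntegrable (by
      apply continuous_finset_sum
      intro m _
      apply continuous_const.mul
      exact Complex.continuous_exp.comp (by fun_prop)) _ _)
  rw [swap]
  have inner : ∀ j ∈ Finset.range B,
      (∫ t in (0:ℝ)..(2*Real.pi), ∑ m ∈ Finset.range B,
        ((p.coeff j : ℂ) * (q.coeff m : ℂ)) *
          Complex.exp ((((m:ℤ) - (j:ℤ) - k : ℤ):ℂ) * t * Complex.I))
      = ((2 * Real.pi : ℝ) : ℂ) * ((p.coeff j * cz q ((j:ℤ)+k) : ℤ) : ℂ) := by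
    intro j _
    rw [intervalIntegral.integral_finset_sum (fun m _ => integ _ _)]
    have each : ∀ m ∈ Finset.range B,
        (∫ t in (0:ℝ)..(2*Real.pi),
          ((p.coeff j : ℂ) * (q.coeff m : ℂ)) *
            Complex.exp ((((m:ℤ) - (j:ℤ) - k : ℤ):ℂ) * t * Complex.I))
        = ((p.coeff j : ℂ) * (q.coeff m : ℂ)) *
            (if ((m:ℤ) - (j:ℤ) - k : ℤ) = 0 then ((2 * Real.pi : ℝ) : ℂ) else 0) := by
      intro m _
      rw [intervalIntegral.integral_const_mul, intexp]
    rw [Finset.sum_congr rfl each]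
    by_cases h0 : 0 ≤ (j:ℤ) + k ∧ ((j:ℤ)+k).toNat < B
    · obtain ⟨h1, h2⟩ := h0
      rw [Finset.sum_eq_single (((j:ℤ)+k).toNat)]
      · rw [if_pos (by omega)]
        have : cz q ((j:ℤ)+k) = q.coeff (((j:ℤ)+k).toNat) := by rw [cz, if_pos h1]
        rw [this]
        push_cast
        ring
      · intro m _ hm
        rw [if_neg (by omega), mul_zero]
      · intro hmem
        exact absurd (Finset.mem_range.mpr h2) hmem
    · have hcz : cz q ((j:ℤ)+k) = 0 := by
        rw [cz]
        split
        · apply Polynomial.coeff_eq_zero_of_natDegree_lt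
          omega
        · rfl
      rw [hcz, Finset.sum_eq_zero]
      · simp
      · intro m hm
        simp only [Finset.mem_range] at hm
        rw [if_neg (by omega), mul_zero]
  rw [Finset.sum_congr rfl inner, ← Finset.mul_sum]
  have hpi : ((2 * Real.pi : ℝ) : ℂ) ≠ 0 := by
    simp [Real.pi_ne_zero]
  rw [← mul_assoc]
  have : (1 / ((2:ℂ) * (Real.pi:ℂ))) * ((2 * Real.pi : ℝ) : ℂ) = 1 := by
    push_cast at hpi ⊢
    field_simp
  push_cast at this ⊢
  rw [this, one_mul, cor]
  push_cast
  ring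


lemma Xodd (n : ℕ) (hn : 1 ≤ n) : Odd (An n (Kk n)) := by
  have key : ∀ m : ℕ, Odd (An (m+3) (Kk (m+3))) := by
    intro m
    induction m with
    | zero => rw [show (0+3 : ℕ) = 3 from rfl, X3]; exact odd_one
    | succ m ih =>
      have h := Xrec (m+1) (by omega)
      rw [show (m+1+3 : ℕ) = m+1+3 from rfl] at h
      have : An (m+1+3) (Kk (m+1+3)) =
          An (m+3) (Kk (m+3)) + 2 * (An (m+2) (Kk (m+2)) - 2 * An (m+1) (Kk (m+1))) := by
        rw [h]; ring
      rw [this]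
      exact ih.add_even (even_two_mul _)
  rcases n with _ | _ | _ | m
  · omega
  · rw [X1]; exact odd_one
  · rw [X2]; exact ⟨-1, by ring⟩
  · exact key m

lemma fc_fP (n : ℕ) : fc (fP n) (Kk n) = ((An n (Kk n) : ℤ) : ℂ) := by
  have hfun : fP n = fun z => (starRingEnd ℂ) (aeval z (RSP n)) * aeval z (RSP n) :=
    funext fun z => mul_comm _ _
  rw [hfun, fc_eq (RSP n) (RSP n) (2^n) (RS_deg n).1 (RS_deg n).1 (Kk n)]
  rfl


set_option maxHeartbeats 3000000 in
theorem autocorrelation_lower_bound_at_kn (l : ℝ)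
    (hl : l ^ 3 - 5 * l ^ 2 + 12 * l - 16 = 0) :
    ∃ C₁ : ℝ, 0 < C₁ ∧ ∀ n : ℕ, 1 ≤ n →
      C₁ * l ^ ((n : ℝ) / 2) ≤
        ‖fc (fP n) ((2 * 2 ^ n + (-1) ^ n) / 3 : ℤ)‖ := by
  have hl1 : (2.75:ℝ) < l := by nlinarith [sq_nonneg (l - 2.75), sq_nonneg l, sq_nonneg (l-3)]
  have hl2 : l < 2.76 := by nlinarith [sq_nonneg (l - 2.76), sq_nonneg l, sq_nonneg (l-3)]
  have hl0 : (0:ℝ) < l := by linarith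
  set s := Real.sqrt l with hs_def
  have hsq : s^2 = l := Real.sq_sqrt hl0.le
  have hs0 : 0 < s := Real.sqrt_pos.mpr hl0
  have hs1 : (1.65:ℝ) < s := by nlinarith [hsq, sq_nonneg (s - 1.65), hs0.le]
  have hs2 : s < 1.67 := by nlinarith [hsq, sq_nonneg (s - 1.67), hs0.le]
  have hcubic : s^3 + s^2 - 2*s - 4 = 0 := by
    have hfact : (s^3 + s^2 - 2*s - 4) * (s^3 - s^2 - 2*s + 4) = 0 := by
      have h : (s^3 + s^2 - 2*s - 4) * (s^3 - s^2 - 2*s + 4) = l^3 - 5*l^2 + 12*l - 16 := by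
        rw [← hsq]; ring
      rw [h, hl]
    rcases mul_eq_zero.mp hfact with h | h
    · exact h
    · nlinarith
  set p : ℝ := -s - 1 with hp_def
  set q : ℝ := s^2 + s - 2 with hq_def
  have hq0 : 0 < q := by rw [hq_def]; nlinarith
  have h4q : 0 < 4*q - p^2 := by rw [hq_def, hp_def]; nlinarith
  have hqs : q < s^2 := by rw [hq_def]; nlinarith
  set D : ℝ := 3*s^2 + 2*s - 2 with hD_def
  have hD0 : 0 < D := by rw [hD_def]; nlinarith
  set α : ℝ := -(s+2)/D with hα_def
  have hα0 : α < 0 := by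
    rw [hα_def]
    apply div_neg_of_neg_of_pos (by linarith) hD0
  have hαD : α * D = -(s+2) := by
    rw [hα_def, div_mul_cancel₀ _ hD0.ne']
  -- the integer sequence and its real version
  obtain ⟨r, hr1, hr2, hr3, hrec, hodd, hfc⟩ :
      ∃ r : ℕ → ℝ, r 1 = 1 ∧ r 2 = -1 ∧ r 3 = 1 ∧
        (∀ n, 1 ≤ n → r (n+3) = r (n+2) + 2 * r (n+1) - 4 * r n) ∧
        (∀ n, 1 ≤ n → 1 ≤ |r n|) ∧
        (∀ n : ℕ, ‖fc (fP n) ((2 * 2 ^ n + (-1) ^ n) / 3 : ℤ)‖ = |r n|) := by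
    refine ⟨fun n => ((An n (Kk n) : ℤ) : ℝ), by norm_num [X1], by norm_num [X2],
      by norm_num [X3], ?_, ?_, ?_⟩
    · intro n hn
      simp only
      rw [Xrec n hn]
      push_cast
      ring
    · intro n hn
      have hodd : Odd (An n (Kk n)) := Xodd n hn
      have hxne : An n (Kk n) ≠ 0 := by
        rintro h0
        rw [h0] at hodd
        simp at hodd
      rw [← Int.cast_abs]
      exact_mod_cast Int.one_le_abs hxne
    · intro n
      have hk : ((2 * 2 ^ n + (-1) ^ n) / 3 : ℤ) = Kk n := (Kk_eq_div n).symm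
      simp only
      rw [hk, fc_fP n, Complex.norm_intCast, ← Int.cast_abs]
  set e : ℕ → ℝ := fun n => r n - α * (-s)^n with he_def
  have hbase : e 3 + p * e 2 + q * e 1 = 0 := by
    simp only [he_def, hr1, hr2, hr3, hp_def, hq_def]
    linear_combination s * hαD
  have hstep : ∀ n, 1 ≤ n →
      e (n+3) + p * e (n+2) + q * e (n+1) = (-s) * (e (n+2) + p * e (n+1) + q * e n) := by
    intro n hn
    have hr := hrec n hn
    simp only [he_def, hp_def, hq_def]
    have p1 : (-s)^(n+1) = (-s)^n * (-s) := pow_succ _ _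
    have p2 : (-s)^(n+2) = (-s)^n * (-s)^2 := by rw [pow_add]
    have p3 : (-s)^(n+3) = (-s)^n * (-s)^3 := by rw [pow_add]
    rw [p1, p2, p3]
    linear_combination hr + (r n) * hcubic
  have hg0 : ∀ n, 1 ≤ n → e (n+2) + p * e (n+1) + q * e n = 0 := by
    intro n hn
    induction n with
    | zero => omega
    | succ m ih =>
      rcases Nat.lt_or_ge m 1 with h | h
      · have hm : m = 0 := by omega
        subst hm
        exact hbase
      · have hs' := hstep m h
        rw [show m+1+2 = m+3 from rfl, show m+1+1 = m+2 from rfl, hs', ih h, mul_zero]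
  set E : ℕ → ℝ := fun n => e (n+1)^2 + p * e (n+1) * e n + q * e n^2 with hE_def
  have hEstep : ∀ n, 1 ≤ n → E (n+1) = q * E n := by
    intro n hn
    have h := hg0 n hn
    simp only [hE_def]
    rw [show n+1+1 = n+2 from rfl]
    linear_combination (e (n+2) - q * e n) * h
  have hEn : ∀ m : ℕ, E (m+1) = E 1 * q^m := by
    intro m
    induction m with
    | zero => simp
    | succ m ih =>
      rw [hEstep (m+1) (by omega), ih, pow_succ]
      ring
  set c2 : ℝ := q - p^2/4 with hc2_def
  have hc2 : 0 < c2 := by rw [hc2_def]; nlinarith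
  have hebound : ∀ n, 1 ≤ n → (e n)^2 * c2 ≤ E 1 * q^(n-1) := by
    intro n hn
    obtain ⟨m, rfl⟩ : ∃ m, n = m+1 := ⟨n-1, by omega⟩
    have h1 : E (m+1) = E 1 * q^m := hEn m
    have h2 : (e (m+1))^2 * c2 ≤ E (m+1) := by
      simp only [hE_def, hc2_def]
      have hid : e (m+1+1)^2 + p * e (m+1+1) * e (m+1) + q * e (m+1)^2
          - (e (m+1))^2 * (q - p^2/4) = (e (m+1+1) + p * e (m+1) / 2)^2 := by ring
      have hkey := sq_nonneg (e (m+1+1) + p * e (m+1) / 2)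
      linarith [hid, hkey]
    rw [show m+1-1 = m from rfl, ← h1]
    exact h2
  have hE1 : 0 ≤ E 1 := by
    have hb := hebound 1 le_rfl
    have h0 : (0:ℝ) ≤ (e 1)^2 * c2 := mul_nonneg (sq_nonneg _) hc2.le
    norm_num at hb
    linarith
  set ρ : ℝ := Real.sqrt q with hρ_def
  have hρq : ρ^2 = q := Real.sq_sqrt hq0.le
  have hρ0 : 0 ≤ ρ := Real.sqrt_nonneg q
  have hρs : ρ < s := by nlinarith [hρq, hqs, hρ0, hs0]
  set K0 : ℝ := Real.sqrt (E 1 / c2 / q) with hK0_def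
  have hK0 : 0 ≤ K0 := Real.sqrt_nonneg _
  have hKe : ∀ n, 1 ≤ n → |e n| ≤ K0 * ρ^n := by
    intro n hn
    have h := hebound n hn
    have harg : 0 ≤ E 1 / c2 / q := by positivity
    have hqpow : q^(n-1) * q = q^n := by
      rw [← pow_succ]
      congr 1
      omega
    have hsq' : (K0 * ρ^n)^2 = E 1 / c2 / q * q^n := by
      rw [mul_pow, Real.sq_sqrt harg, ← pow_mul, mul_comm n 2, pow_mul, hρq]
    have hle : (e n)^2 ≤ (K0 * ρ^n)^2 := by
      rw [hsq', ← hqpow]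
      rw [div_div]
      rw [div_mul_eq_mul_div, le_div_iff₀ (by positivity)]
      calc (e n)^2 * (c2 * q) = ((e n)^2 * c2) * q := by ring
        _ ≤ (E 1 * q^(n-1)) * q := by
            apply mul_le_mul_of_nonneg_right h hq0.le
        _ = E 1 * (q^(n-1) * q) := by ring
    calc |e n| = Real.sqrt ((e n)^2) := (Real.sqrt_sq_eq_abs _).symm
      _ ≤ Real.sqrt ((K0 * ρ^n)^2) := Real.sqrt_le_sqrt hle
      _ = K0 * ρ^n := Real.sqrt_sq (by positivity)
  have hρs1 : ρ/s < 1 := (div_lt_one hs0).mpr hρs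
  obtain ⟨N, hN⟩ := exists_pow_lt_of_lt_one
    (show (0:ℝ) < (-α)/(2*(K0+1)) from div_pos (by linarith) (by positivity)) hρs1
  set M := max N 1 with hM_def
  set C₁ : ℝ := min ((-α)/2) ((s^M)⁻¹) with hC_def
  have hC0 : 0 < C₁ := by
    apply lt_min
    · linarith
    · positivity
  refine ⟨C₁, hC0, ?_⟩
  intro n hn
  rw [hfc n]
  have hexp : l ^ ((n : ℝ) / 2) = s ^ n := by
    rw [hs_def, Real.sqrt_eq_rpow, ← Real.rpow_natCast (l ^ ((1:ℝ)/2)) n,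
      ← Real.rpow_mul hl0.le]
    congr 1
    ring
  rw [hexp]
  rcases Nat.lt_or_ge n M with hnM | hnM
  · -- small n : use oddness
    have h1le : (1:ℝ) ≤ |r n| := hodd n hn
    have hs1' : (1:ℝ) ≤ s := by linarith
    calc C₁ * s^n ≤ (s^M)⁻¹ * s^n := by
          apply mul_le_mul_of_nonneg_right (min_le_right _ _) (by positivity)
      _ ≤ (s^M)⁻¹ * s^M := by
          have hmono : s^n ≤ s^M := pow_le_pow_right₀ hs1' hnM.le
          apply mul_le_mul_of_nonneg_left hmono (by positivity)
      _ = 1 := inv_mul_cancel₀ (by positivity)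
      _ ≤ |r n| := h1le
  · -- large n
    have hNn : N ≤ n := le_trans (le_max_left _ _) hnM
    have hratio : (ρ/s)^n ≤ (ρ/s)^N :=
      pow_le_pow_of_le_one (by positivity) hρs1.le hNn
    have hsmall : K0 * ρ^n ≤ (-α)/2 * s^n := by
      have hρn : ρ^n = (ρ/s)^n * s^n := by
        rw [div_pow, div_mul_cancel₀]
        positivity
      rw [hρn, ← mul_assoc]
      apply mul_le_mul_of_nonneg_right _ (by positivity)
      calc K0 * (ρ/s)^n ≤ K0 * (ρ/s)^N :=
            mul_le_mul_of_nonneg_left hratio hK0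
        _ ≤ K0 * ((-α)/(2*(K0+1))) := mul_le_mul_of_nonneg_left hN.le hK0
        _ ≤ (-α)/2 := by
            rw [mul_div_assoc']
            rw [div_le_div_iff₀ (by positivity) (by norm_num)]
            nlinarith [mul_nonneg hK0 (neg_nonneg.mpr hα0.le)]
    have hre : α * (-s)^n = r n - e n := by
      simp only [he_def]
      ring
    have habs2 : |α * (-s)^n| = (-α) * s^n := by
      rw [abs_mul, abs_pow, abs_neg, abs_of_pos hs0, abs_of_neg hα0]
    have htri : (-α) * s^n ≤ |r n| + |e n| := by
      rw [← habs2, hre]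
      exact abs_sub _ _
    have hen : |e n| ≤ (-α)/2 * s^n := le_trans (hKe n hn) hsmall
    have : (-α)/2 * s^n ≤ |r n| := by linarith
    calc C₁ * s^n ≤ (-α)/2 * s^n := by
          apply mul_le_mul_of_nonneg_right (min_le_left _ _) (by positivity)
      _ ≤ |r n| := this
end

section
/- For the n-th Rudin-Shapiro polynomial P_n, the L⁴ norm satisfies M₄(P_n)⁴ = (1/2π)∫_{−π}^{π}|P_n(e^{it})|⁴ dt ∼ 4^{n+1}/3 as n → ∞; equivalently M₄(P_n)⁴ / 4^{n+1} → 1/3. -/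
open Polynomial

section RSaux
open LaurentPolynomial
noncomputable section

abbrev LZ := LaurentPolynomial ℤ

instance LZ_coeFun : CoeFun LZ (fun _ => ℤ → ℤ) := ⟨fun f => f.coeff⟩

lemma mulT_apply (f : LZ) (m k : ℤ) : (f * (T m : LZ)) k = f (k - m) := by
  rw [show (T m : LZ) = AddMonoidAlgebra.single m 1 from rfl, AddMonoidAlgebra.coeff_mul_single_apply, mul_one, sub_eq_add_neg]

lemma Cmul_apply (r : ℤ) (f : LZ) (k : ℤ) : ((LaurentPolynomial.C r : LZ) * f) k = r * f k := by
  rw [show (LaurentPolynomial.C r : LZ) = AddMonoidAlgebra.single 0 r from rfl,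
    AddMonoidAlgebra.coeff_single_mul_apply]
  simp

lemma bdd_mul {f g : LZ} {a b : ℤ}
    (hf : ∀ k, a ≤ |k| → f k = 0) (hg : ∀ k, b ≤ |k| → g k = 0) :
    ∀ k : ℤ, a + b - 1 ≤ |k| → (f * g) k = 0 := by
  intro k hk
  by_contra h
  have hmem : k ∈ (f * g).coeff.support := Finsupp.mem_support_iff.2 h
  have h2 := AddMonoidAlgebra.support_coeff_mul_subset f g hmem
  obtain ⟨x, hx, y, hy, rfl⟩ := Finset.mem_add.1 h2
  have hxa : |x| < a := lt_of_not_ge fun hh => (Finsupp.mem_support_iff.1 hx) (hf x hh)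
  have hyb : |y| < b := lt_of_not_ge fun hh => (Finsupp.mem_support_iff.1 hy) (hg y hh)
  have := abs_add_le x y
  omega


lemma LZ_add_apply (f g : LZ) (k : ℤ) : (f + g) k = f k + g k := rfl
lemma LZ_sub_apply (f g : LZ) (k : ℤ) : (f - g) k = f k - g k := rfl

lemma abs_helper {k m : ℤ} (hm : 0 ≤ m) (h : 2*m ≤ |k|) : m ≤ |k + m| ∧ m ≤ |k - m| := by
  rcases le_or_gt 0 k with hk | hk
  · rw [abs_of_nonneg hk] at h
    exact ⟨by rw [abs_of_nonneg (by linarith)]; linarith,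
      by rw [abs_of_nonneg (by linarith)]; linarith⟩
  · rw [abs_of_neg hk] at h
    exact ⟨by rw [abs_of_nonpos (by linarith)]; linarith,
      by rw [abs_of_nonpos (by linarith)]; linarith⟩


noncomputable def tP (n : ℕ) : LZ := (RSP n).toLaurent
noncomputable def tQ (n : ℕ) : LZ := (RSQ n).toLaurent
noncomputable def Fp (n : ℕ) : LZ := tP n * invert (tP n)
noncomputable def Fq (n : ℕ) : LZ := tQ n * invert (tQ n)
noncomputable def Ac (n : ℕ) : LZ := tP n * invert (tQ n)
noncomputable def Bc (n : ℕ) : LZ := tQ n * invert (tP n)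

lemma tP_succ (n : ℕ) : tP (n + 1) = tP n + tQ n * T ((2:ℤ)^n) := by
  have : RSP (n+1) = RSP n + X ^ (2^n) * RSQ n := rfl
  rw [tP, this, map_add, map_mul, Polynomial.toLaurent_X_pow]
  push_cast
  rw [tP, tQ]; ring

lemma tQ_succ (n : ℕ) : tQ (n + 1) = tP n - tQ n * T ((2:ℤ)^n) := by
  have : RSQ (n+1) = RSP n - X ^ (2^n) * RSQ n := rfl
  rw [tQ, this, map_sub, map_mul, Polynomial.toLaurent_X_pow]
  push_cast
  rw [tP, tQ]; ring

lemma invert_Ac (n : ℕ) : invert (Ac n) = Bc n := by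
  rw [Ac, map_mul, involutive_invert (tQ n)]; rw [Bc]; ring

lemma hTT (n : ℕ) : (T ((2:ℤ)^n) : LZ) * T (-(2:ℤ)^n) = 1 := by
  rw [← T_add]; simp

lemma hTT2 (n : ℕ) : (T (-(2:ℤ)^n) : LZ) * T (-(2:ℤ)^n) = T (-(2*(2:ℤ)^n)) := by
  rw [← T_add]; ring_nf

lemma hTT3 (n : ℕ) : (T ((2:ℤ)^n) : LZ) * T ((2:ℤ)^n) = T (2*(2:ℤ)^n) := by
  rw [← T_add]; ring_nf

structure RSInv (n : ℕ) : Prop where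
  hsum : Fp n + Fq n = LaurentPolynomial.C ((2:ℤ)^(n+1))
  hFp : ∀ k : ℤ, (2:ℤ)^n ≤ |k| → Fp n k = 0
  hA : ∀ k : ℤ, (2:ℤ)^n ≤ |k| → Ac n k = 0
  hFp0 : Fp n 0 = 2^n
  hFq0 : Fq n 0 = 2^n
  ha : 3 * ((Fp n * Fp n) 0) = 4^(n+1) - (-2)^n
  hx : 6 * ((Ac n * Bc n) 0) = 4^(n+1) + 2 * (-2)^n

lemma RSInv.hB {n : ℕ} (I : RSInv n) : ∀ k : ℤ, (2:ℤ)^n ≤ |k| → Bc n k = 0 := by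
  intro k hk
  rw [← invert_Ac, invert_apply]
  exact I.hA (-k) (by rwa [abs_neg])

lemma RSInv.hFq {n : ℕ} (I : RSInv n) : ∀ k : ℤ, (2:ℤ)^n ≤ |k| → Fq n k = 0 := by
  intro k hk
  have h0 : k ≠ 0 := by
    intro h; rw [h] at hk; simp at hk
    have : (0:ℤ) < 2^n := by positivity
    omega
  have := congrArg (fun f : LZ => f k) I.hsum
  simp only [LZ_add_apply] at this
  rw [I.hFp k hk, LaurentPolynomial.C_apply, if_neg h0] at this
  linarith

-- key product identities
lemma eFp (n : ℕ) (I : RSInv n) : Fp (n+1) =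
    LaurentPolynomial.C ((2:ℤ)^(n+1)) + Ac n * T (-(2:ℤ)^n) + Bc n * T ((2:ℤ)^n) := by
  have h := hTT n
  have hs := I.hsum
  simp only [Fp, Fq, Ac, Bc] at hs ⊢
  rw [tP_succ, map_add, map_mul, invert_T]
  linear_combination hs + (tQ n * invert (tQ n)) * h

lemma eFq (n : ℕ) (I : RSInv n) : Fq (n+1) =
    LaurentPolynomial.C ((2:ℤ)^(n+1)) - Ac n * T (-(2:ℤ)^n) - Bc n * T ((2:ℤ)^n) := by
  have h := hTT n
  have hs := I.hsum
  simp only [Fp, Fq, Ac, Bc] at hs ⊢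
  rw [tQ_succ, map_sub, map_mul, invert_T]
  linear_combination hs + (tQ n * invert (tQ n)) * h

lemma eA (n : ℕ) : Ac (n+1) =
    (Fp n - Fq n) - Ac n * T (-(2:ℤ)^n) + Bc n * T ((2:ℤ)^n) := by
  have h := hTT n
  simp only [Fp, Fq, Ac, Bc]
  rw [tP_succ, tQ_succ, map_sub, map_mul, invert_T]
  linear_combination (-(tQ n * invert (tQ n))) * h

lemma eB (n : ℕ) : Bc (n+1) =
    (Fp n - Fq n) + Ac n * T (-(2:ℤ)^n) - Bc n * T ((2:ℤ)^n) := by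
  have h := hTT n
  simp only [Fp, Fq, Ac, Bc]
  rw [tP_succ, tQ_succ, map_add, map_mul, invert_T]
  linear_combination (-(tQ n * invert (tQ n))) * h

lemma PI1 (n : ℕ) (I : RSInv n) : Fp (n+1) * Fp (n+1) =
    LaurentPolynomial.C ((2:ℤ)^(n+1) * (2:ℤ)^(n+1))
    + (Ac n * Ac n) * T (-(2*(2:ℤ)^n)) + (Bc n * Bc n) * T (2*(2:ℤ)^n)
    + LaurentPolynomial.C ((2:ℤ)^(n+1)) * (Ac n * T (-(2:ℤ)^n))
    + LaurentPolynomial.C ((2:ℤ)^(n+1)) * (Ac n * T (-(2:ℤ)^n))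
    + LaurentPolynomial.C ((2:ℤ)^(n+1)) * (Bc n * T ((2:ℤ)^n))
    + LaurentPolynomial.C ((2:ℤ)^(n+1)) * (Bc n * T ((2:ℤ)^n))
    + Ac n * Bc n + Ac n * Bc n := by
  have h1 := hTT2 n; have h2 := hTT3 n; have h3 := hTT n
  have hC : LaurentPolynomial.C ((2:ℤ)^(n+1) * (2:ℤ)^(n+1))
      = (LaurentPolynomial.C ((2:ℤ)^(n+1)) : LZ) * LaurentPolynomial.C ((2:ℤ)^(n+1)) :=
    map_mul _ _ _
  rw [eFp n I]
  linear_combination (Ac n * Ac n) * h1 + (Bc n * Bc n) * h2 + 2 * (Ac n * Bc n) * h3 - hC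

lemma val1 (n : ℕ) (I : RSInv n) :
    (Fp (n+1) * Fp (n+1)) 0 = (2:ℤ)^(n+1) * 2^(n+1) + 2 * ((Ac n * Bc n) 0) := by
  rw [PI1 n I]
  simp only [LZ_add_apply, mulT_apply, Cmul_apply, zero_sub, sub_neg_eq_add, zero_add, neg_neg,
    LaurentPolynomial.C_apply]
  have e1 : (0:ℤ) < 2^n := by positivity
  have hAA : (Ac n * Ac n) (2 * (2:ℤ)^n) = 0 := by
    apply bdd_mul I.hA I.hA
    rw [abs_of_nonneg (by positivity)]; linarith
  have hBB : (Bc n * Bc n) (-(2 * (2:ℤ)^n)) = 0 := by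
    apply bdd_mul I.hB I.hB
    rw [abs_neg, abs_of_nonneg (by positivity)]; linarith
  have hAN : Ac n ((2:ℤ)^n) = 0 := I.hA _ (by rw [abs_of_nonneg (by positivity)])
  have hBN : Bc n (-(2:ℤ)^n) = 0 := I.hB _ (by rw [abs_neg, abs_of_nonneg (by positivity)])
  rw [hAA, hBB, hAN, hBN, if_pos trivial]
  ring

lemma PI2 (n : ℕ) (I : RSInv n) : Ac (n+1) * Bc (n+1)
    + (Ac n * Ac n) * T (-(2*(2:ℤ)^n)) + (Bc n * Bc n) * T (2*(2:ℤ)^n)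
    + LaurentPolynomial.C ((2:ℤ)^(n+1)) * Fp n + LaurentPolynomial.C ((2:ℤ)^(n+1)) * Fp n
    + LaurentPolynomial.C ((2:ℤ)^(n+1)) * Fp n + LaurentPolynomial.C ((2:ℤ)^(n+1)) * Fp n
    = Fp n * Fp n + Fp n * Fp n + Fp n * Fp n + Fp n * Fp n
    + LaurentPolynomial.C ((2:ℤ)^(n+1) * (2:ℤ)^(n+1)) + Ac n * Bc n + Ac n * Bc n := by
  have h1 := hTT2 n; have h2 := hTT3 n; have h3 := hTT n
  have hC : LaurentPolynomial.C ((2:ℤ)^(n+1) * (2:ℤ)^(n+1))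
      = (LaurentPolynomial.C ((2:ℤ)^(n+1)) : LZ) * LaurentPolynomial.C ((2:ℤ)^(n+1)) :=
    map_mul _ _ _
  have hFqe : Fq n = LaurentPolynomial.C ((2:ℤ)^(n+1)) - Fp n := by
    linear_combination I.hsum
  rw [eA, eB, hFqe]
  linear_combination (-(Ac n * Ac n)) * h1 - (Bc n * Bc n) * h2 + 2 * (Ac n * Bc n) * h3 - hC

lemma val2 (n : ℕ) (I : RSInv n) :
    (Ac (n+1) * Bc (n+1)) 0 = 4 * ((Fp n * Fp n) 0) + (2:ℤ)^(n+1) * 2^(n+1)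
      + 2 * ((Ac n * Bc n) 0) - 4 * ((2:ℤ)^(n+1) * 2^n) := by
  have e1 : (0:ℤ) < 2^n := by positivity
  have hAA : (Ac n * Ac n) (2 * (2:ℤ)^n) = 0 := by
    apply bdd_mul I.hA I.hA
    rw [abs_of_nonneg (by positivity)]; linarith
  have hBB : (Bc n * Bc n) (-(2 * (2:ℤ)^n)) = 0 := by
    apply bdd_mul I.hB I.hB
    rw [abs_neg, abs_of_nonneg (by positivity)]; linarith
  have h := congrArg (fun f : LZ => f 0) (PI2 n I)
  simp only [LZ_add_apply, mulT_apply, Cmul_apply, zero_sub, sub_neg_eq_add, zero_add, neg_neg,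
    LaurentPolynomial.C_apply] at h
  rw [hAA, hBB, I.hFp0, if_pos trivial] at h
  linarith

lemma RSInv_succ (n : ℕ) (I : RSInv n) : RSInv (n + 1) := by
  have e1 : (0:ℤ) < 2^n := by positivity
  have hq1 : (2:ℤ)^n * 2^n = 4^n := by rw [← mul_pow]; norm_num
  have habs : ∀ k : ℤ, (2:ℤ)^(n+1) ≤ |k| → ((2:ℤ)^n ≤ |k + 2^n| ∧ (2:ℤ)^n ≤ |k - 2^n|) := by
    intro k hk
    refine abs_helper (le_of_lt e1) ?_
    rw [pow_succ] at hk; linarith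
  have hknz : ∀ k : ℤ, (2:ℤ)^(n+1) ≤ |k| → k ≠ 0 := by
    intro k hk h0
    rw [h0] at hk; simp at hk
    have : (0:ℤ) < 2^(n+1) := by positivity
    omega
  refine ⟨?_, ?_, ?_, ?_, ?_, ?_, ?_⟩
  · -- hsum
    rw [eFp n I, eFq n I]
    have : LaurentPolynomial.C ((2:ℤ)^(n+1+1))
        = (LaurentPolynomial.C ((2:ℤ)^(n+1)) : LZ) + LaurentPolynomial.C ((2:ℤ)^(n+1)) := by
      rw [← map_add]
      norm_num [pow_succ]
      ring_nf
    rw [this]; ring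
  · -- hFp bound
    intro k hk
    obtain ⟨hk1, hk2⟩ := habs k hk
    have hk' : (2:ℤ)^n ≤ |k| := by
      rw [pow_succ] at hk; linarith [abs_nonneg k]
    rw [eFp n I, LZ_add_apply, LZ_add_apply, mulT_apply, mulT_apply,
      LaurentPolynomial.C_apply, if_neg (hknz k hk)]
    rw [sub_neg_eq_add, I.hA _ hk1, I.hB _ hk2]
    ring
  · -- hA bound
    intro k hk
    obtain ⟨hk1, hk2⟩ := habs k hk
    have hk' : (2:ℤ)^n ≤ |k| := by
      rw [pow_succ] at hk; linarith [abs_nonneg k]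
    rw [eA, LZ_add_apply, LZ_sub_apply, LZ_sub_apply, mulT_apply, mulT_apply,
      sub_neg_eq_add, I.hA _ hk1, I.hB _ hk2, I.hFp _ hk', I.hFq _ hk']
    ring
  · -- hFp0
    have hN : Ac n ((2:ℤ)^n) = 0 := I.hA _ (by rw [abs_of_nonneg (by positivity)])
    have hBN : Bc n (-(2:ℤ)^n) = 0 := I.hB _ (by rw [abs_neg, abs_of_nonneg (by positivity)])
    rw [eFp n I, LZ_add_apply, LZ_add_apply, mulT_apply, mulT_apply,
      LaurentPolynomial.C_apply, if_pos rfl, zero_sub, neg_neg, zero_sub, hN, hBN]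
    ring
  · -- hFq0
    have hN : Ac n ((2:ℤ)^n) = 0 := I.hA _ (by rw [abs_of_nonneg (by positivity)])
    have hBN : Bc n (-(2:ℤ)^n) = 0 := I.hB _ (by rw [abs_neg, abs_of_nonneg (by positivity)])
    rw [eFq n I, LZ_sub_apply, LZ_sub_apply, mulT_apply, mulT_apply,
      LaurentPolynomial.C_apply, if_pos rfl, zero_sub, neg_neg, zero_sub, hN, hBN]
    ring
  · -- ha
    rw [val1 n I]
    linear_combination I.hx + 12 * hq1
  · -- hx
    rw [val2 n I]
    linear_combination 8 * I.ha + 2 * I.hx - 24 * hq1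

lemma RSInv_all (n : ℕ) : RSInv n := by
  induction n with
  | zero =>
    have h1 : tP 0 = 1 := by rw [tP, show RSP 0 = 1 from rfl, map_one]
    have h2 : tQ 0 = 1 := by rw [tQ, show RSQ 0 = 1 from rfl, map_one]
    have hFp : Fp 0 = 1 := by rw [Fp, h1, map_one, one_mul]
    have hFq : Fq 0 = 1 := by rw [Fq, h2, map_one, one_mul]
    have hAc : Ac 0 = 1 := by rw [Ac, h1, h2, map_one, one_mul]
    have hBc : Bc 0 = 1 := by rw [Bc, h1, h2, map_one, one_mul]
    have hone : ∀ k : ℤ, (1 : LZ) k = if k = 0 then 1 else 0 := by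
      intro k
      rw [show (1 : LZ) = LaurentPolynomial.C 1 from (map_one _).symm,
        LaurentPolynomial.C_apply]
    refine ⟨?_, ?_, ?_, ?_, ?_, ?_, ?_⟩
    · rw [hFp, hFq]
      ext k
      rw [LZ_add_apply, hone, LaurentPolynomial.C_apply]
      norm_num
      split <;> norm_num
    · intro k hk
      rw [hFp, hone, if_neg]
      intro h0; rw [h0] at hk; norm_num at hk
    · intro k hk
      rw [hAc, hone, if_neg]
      intro h0; rw [h0] at hk; norm_num at hk
    · rw [hFp, hone]; norm_num
    · rw [hFq, hone]; norm_num
    · rw [hFp, one_mul, hone]; norm_num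
    · rw [hAc, hBc, one_mul, hone]; norm_num
  | succ n ih => exact RSInv_succ n ih

lemma pair_eq (f g : LZ) :
    ((f * invert g : LZ)) 0 = ∑ a ∈ f.coeff.support, f a * g a := by
  conv_lhs => rw [← AddMonoidAlgebra.sum_coeff_single f, Finsupp.sum, Finset.sum_mul,
    AddMonoidAlgebra.coeff_sum, Finsupp.finset_sum_apply]
  refine Finset.sum_congr rfl fun a _ => ?_
  rw [AddMonoidAlgebra.coeff_single_mul_apply]
  simp

lemma toLaurent_apply_nat (p : Polynomial ℤ) (k : ℕ) : (p.toLaurent) ((k:ℤ)) = p.coeff k := by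
  rw [coeff_toLaurent, show ((k:ℤ)) = Nat.castEmbedding k from rfl,
    Finsupp.mapDomain_apply Nat.castEmbedding.injective]
  rfl

lemma bridge (p : Polynomial ℤ) : ((p.toLaurent * invert p.toLaurent : LZ)) 0
    = ∑ k ∈ Finset.range (p.natDegree + 1), (p.coeff k)^2 := by
  rw [pair_eq, support_coeff_toLaurent, Finset.sum_map]
  have h1 : ∀ k ∈ p.support, (p.toLaurent (Nat.castEmbedding k)) * (p.toLaurent (Nat.castEmbedding k)) = (p.coeff k)^2 := by
    intro k _
    rw [show ((Nat.castEmbedding k : ℤ)) = (k : ℤ) from rfl, toLaurent_apply_nat]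
    ring
  rw [Finset.sum_congr rfl h1]
  refine Finset.sum_subset Polynomial.supp_subset_range_natDegree_succ ?_
  intro k _ hk
  rw [Polynomial.notMem_support_iff.1 hk]
  ring

lemma final_alg (n : ℕ) :
    3 * (∑ k ∈ Finset.range ((RSP n ^ 2).natDegree + 1), ((RSP n ^ 2).coeff k)^2)
      = 4^(n+1) - (-2)^n := by
  rw [← bridge]
  have h : ((RSP n ^ 2).toLaurent * invert ((RSP n ^ 2).toLaurent) : LZ) = Fp n * Fp n := by
    rw [map_pow, map_pow, Fp, tP]; ring
  rw [h]
  exact (RSInv_all n).ha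

lemma cos_int_integral (m : ℤ) (hm : m ≠ 0) :
    ∫ t in (-Real.pi)..Real.pi, Real.cos (m * t) = 0 := by
  have hm' : (m:ℝ) ≠ 0 := Int.cast_ne_zero.2 hm
  rw [intervalIntegral.integral_comp_mul_left Real.cos hm', integral_cos]
  rw [mul_neg, Real.sin_neg, Real.sin_int_mul_pi]
  simp

lemma key_re (c : ℝ) (θ : ℝ) : ((c:ℂ) * Complex.exp (θ * Complex.I)).re = c * Real.cos θ := by
  rw [Complex.re_ofReal_mul, Complex.exp_ofReal_mul_I_re]

lemma parseval (p : Polynomial ℤ) :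
    (∫ t in (-Real.pi)..Real.pi,
        ‖Polynomial.aeval (Complex.exp (t * Complex.I)) p‖ ^ 2)
      = 2 * Real.pi * ∑ k ∈ Finset.range (p.natDegree + 1), ((p.coeff k : ℝ))^2 := by
  set M := p.natDegree + 1 with hM
  set c : ℕ → ℝ := fun k => (p.coeff k : ℝ) with hc
  have hpt : ∀ t : ℝ, ‖Polynomial.aeval (Complex.exp (t * Complex.I)) p‖ ^ 2
      = ∑ j ∈ Finset.range M, ∑ k ∈ Finset.range M,
          c j * c k * Real.cos (((j:ℝ) - k) * t) := by
    intro t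
    have hw : Polynomial.aeval (Complex.exp (t * Complex.I)) p
        = ∑ j ∈ Finset.range M, ((c j : ℂ)) * Complex.exp ((j:ℂ) * (t * Complex.I)) := by
      rw [Polynomial.aeval_eq_sum_range]
      refine Finset.sum_congr rfl fun j _ => ?_
      rw [Complex.exp_nat_mul]
      simp [hc, zsmul_eq_mul]
    have habs : (‖Polynomial.aeval (Complex.exp (t * Complex.I)) p‖) ^ 2
        = ((Polynomial.aeval (Complex.exp (t * Complex.I)) p)
            * (starRingEnd ℂ) (Polynomial.aeval (Complex.exp (t * Complex.I)) p)).re := by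
      rw [Complex.mul_conj]
      simp [Complex.sq_norm]
    rw [habs, hw]
    rw [map_sum, Finset.sum_mul_sum, Complex.re_sum]
    refine Finset.sum_congr rfl fun j _ => ?_
    rw [Complex.re_sum]
    refine Finset.sum_congr rfl fun k _ => ?_
    have hconj : (starRingEnd ℂ) ((c k : ℂ) * Complex.exp ((k:ℂ) * (t * Complex.I)))
        = (c k : ℂ) * Complex.exp (-((k:ℂ) * (t * Complex.I))) := by
      rw [map_mul, ← Complex.exp_conj]
      simp [Complex.conj_ofReal]
    rw [hconj]
    have : ((c j : ℂ)) * Complex.exp ((j:ℂ) * (t * Complex.I))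
          * ((c k : ℂ) * Complex.exp (-((k:ℂ) * (t * Complex.I))))
        = ((c j * c k : ℝ) : ℂ) * Complex.exp ((((j:ℝ) - k) * t : ℝ) * Complex.I) := by
      rw [mul_mul_mul_comm, ← Complex.exp_add]
      push_cast
      ring_nf
    rw [this, key_re]
  have hcos : ∀ j k : ℕ, (∫ t in (-Real.pi)..Real.pi, Real.cos (((j:ℝ) - k) * t))
      = if j = k then 2 * Real.pi else 0 := by
    intro j k
    by_cases h : j = k
    · subst h
      simp only [sub_self, zero_mul, Real.cos_zero, if_pos rfl]
      rw [intervalIntegral.integral_const]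
      simp [two_mul]
    · rw [if_neg h]
      have h2 : ((j:ℝ) - k) = ((j - k : ℤ) : ℝ) := by push_cast; ring
      rw [h2]
      exact cos_int_integral _ (sub_ne_zero.2 (by exact_mod_cast h))
  simp only [hpt]
  rw [intervalIntegral.integral_finset_sum
    (fun j _ => Continuous.intervalIntegrable (by fun_prop) _ _)]
  have step1 : ∀ j ∈ Finset.range M,
      (∫ t in (-Real.pi)..Real.pi, ∑ k ∈ Finset.range M, c j * c k * Real.cos (((j:ℝ) - k) * t))
        = ∑ k ∈ Finset.range M, (c j * c k) * ∫ t in (-Real.pi)..Real.pi, Real.cos (((j:ℝ) - k) * t) := by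
    intro j _
    rw [intervalIntegral.integral_finset_sum
      (fun k _ => Continuous.intervalIntegrable (by fun_prop) _ _)]
    exact Finset.sum_congr rfl fun k _ => intervalIntegral.integral_const_mul _ _
  rw [Finset.sum_congr rfl step1]
  have step2 : ∀ j ∈ Finset.range M,
      (∑ k ∈ Finset.range M, (c j * c k) * ∫ t in (-Real.pi)..Real.pi, Real.cos (((j:ℝ) - k) * t))
        = c j * c j * (2 * Real.pi) := by
    intro j hj
    have : ∀ k ∈ Finset.range M, (c j * c k) * (∫ t in (-Real.pi)..Real.pi, Real.cos (((j:ℝ) - k) * t))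
        = if j = k then c j * c k * (2 * Real.pi) else 0 := by
      intro k _
      rw [hcos j k]
      split <;> simp
    rw [Finset.sum_congr rfl this, Finset.sum_ite_eq (Finset.range M) j
      (fun k => c j * c k * (2 * Real.pi)), if_pos hj]
  rw [Finset.sum_congr rfl step2, Finset.mul_sum]
  exact Finset.sum_congr rfl fun j _ => by ring

end
end RSaux

open Filter in
theorem littlewood_fourth_moment :
    Tendsto (fun n : ℕ =>
        ((1 / (2 * Real.pi)) *
          ∫ t in (-Real.pi)..Real.pi,
            ‖Pe n (Complex.exp (t * Complex.I))‖ ^ 4) / 4 ^ (n + 1))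
      atTop (nhds (1 / 3)) := by
  have hfun : ∀ n : ℕ, ((1 / (2 * Real.pi)) *
          ∫ t in (-Real.pi)..Real.pi,
            ‖Pe n (Complex.exp (t * Complex.I))‖ ^ 4) / 4 ^ (n + 1)
      = 1/3 - (1/12) * (-1/2 : ℝ)^n := by
    intro n
    have hp : ∀ t : ℝ, ‖Pe n (Complex.exp (t * Complex.I))‖ ^ 4
        = ‖Polynomial.aeval (Complex.exp (t * Complex.I)) (RSP n ^ 2)‖ ^ 2 := by
      intro t
      rw [map_pow, norm_pow, ← pow_mul]
      rfl
    simp only [hp]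
    rw [parseval (RSP n ^ 2)]
    have h3' : 3 * (∑ k ∈ Finset.range ((RSP n ^ 2).natDegree + 1), ((RSP n ^ 2).coeff k : ℝ)^2)
        = 4^(n+1) - (-2 : ℝ)^n := by exact_mod_cast final_alg n
    set S := ∑ k ∈ Finset.range ((RSP n ^ 2).natDegree + 1), ((RSP n ^ 2).coeff k : ℝ)^2 with hS
    have hpi : Real.pi ≠ 0 := Real.pi_ne_zero
    rw [show (1 / (2 * Real.pi)) * (2 * Real.pi * S) = S by field_simp]
    have h4 : (4:ℝ)^(n+1) ≠ 0 := by positivity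
    rw [div_eq_iff h4]
    have hq : ((-1/2 : ℝ))^n * 4^n = (-2)^n := by rw [← mul_pow]; norm_num
    linear_combination (1/3) * h3' + (1/3) * hq
  simp only [hfun]
  have h0 : Tendsto (fun n : ℕ => ((-1/2 : ℝ))^n) atTop (nhds 0) :=
    tendsto_pow_atTop_nhds_zero_of_abs_lt_one (by rw [abs_lt]; norm_num)
  have := (tendsto_const_nhds (x := (1:ℝ)/3) (f := atTop)).sub (h0.const_mul (1/12))
  simpa using this
end
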